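/- Let G be a finite graph on n ≥ 3 vertices with labels assigned by a uniform random permutation, and define the weighted edge count R_w(t) = q(t)·R₁(t) + p(t)·R₂(t) with p(t) = (t−1)/(n−2), q(t) = 1 − p(t). Then E[R_w(t)] = |G| · (t−1)(n−t−1)/((n−1)(n−2)). -/

import Mathlib

open Finset
open scoped Classical

noncomputable section

/-- Label of vertex `v` under permutation `π`: a value in `{1,...,n}`. -/
def lab {n : ℕ} (π : Equiv.Perm (Fin n)) (v : Fin n) : ℕ := (π v).val + 1

/-- Number of edges of `G` with both endpoint labels `≤ t`. -/
def R1 {n : ℕ} (G : SimpleGraph (Fin n)) (t : ℕ) (π : Equiv.Perm (Fin n)) : ℕ :=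
  (G.edgeFinset.filter (fun e => ∀ v ∈ e, lab π v ≤ t)).card

/-- Number of edges of `G` with both endpoint labels `> t`. -/
def R2 {n : ℕ} (G : SimpleGraph (Fin n)) (t : ℕ) (π : Equiv.Perm (Fin n)) : ℕ :=
  (G.edgeFinset.filter (fun e => ∀ v ∈ e, t < lab π v)).card

/-- Number of edges of `G` with one endpoint label `≤ t` and the other `> t`. -/
def R0 {n : ℕ} (G : SimpleGraph (Fin n)) (t : ℕ) (π : Equiv.Perm (Fin n)) : ℕ :=
  (G.edgeFinset.filter (fun e => (∃ v ∈ e, lab π v ≤ t) ∧ (∃ v ∈ e, t < lab π v))).card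

/-- Expectation under the permutation null distribution (uniform over all `n!` permutations). -/
def Ex {n : ℕ} (f : Equiv.Perm (Fin n) → ℝ) : ℝ :=
  (∑ π : Equiv.Perm (Fin n), f π) / (Nat.factorial n)

/-- Variance under the permutation null distribution. -/
def Var {n : ℕ} (f : Equiv.Perm (Fin n) → ℝ) : ℝ := Ex (fun π => (f π - Ex f) ^ 2)

/-- Covariance under the permutation null distribution. -/
def Cov {n : ℕ} (f g : Equiv.Perm (Fin n) → ℝ) : ℝ :=
  Ex (fun π => (f π - Ex f) * (g π - Ex g))

/-- Weighted edge count `R_w(t) = q(t) R₁(t) + p(t) R₂(t)` with `p(t) = (t-1)/(n-2)`. -/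
def Rw {n : ℕ} (G : SimpleGraph (Fin n)) (t : ℕ) (π : Equiv.Perm (Fin n)) : ℝ :=
  (1 - ((t : ℝ) - 1) / ((n : ℝ) - 2)) * (R1 G t π : ℝ)
    + (((t : ℝ) - 1) / ((n : ℝ) - 2)) * (R2 G t π : ℝ)



variable {n : ℕ}

private lemma cnt_symm (S : Finset (Fin n)) {a b c d : Fin n} (hab : a ≠ b) (hcd : c ≠ d) :
    (univ.filter (fun π : Equiv.Perm (Fin n) => π a ∈ S ∧ π b ∈ S)).card =
    (univ.filter (fun π : Equiv.Perm (Fin n) => π c ∈ S ∧ π d ∈ S)).card := by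
  set τ : Equiv.Perm (Fin n) := Equiv.swap a c with hτ
  have hτc : τ c = a := Equiv.swap_apply_right a c
  have hτd : τ d ≠ a := by
    intro h
    apply hcd
    have := congrArg τ h
    rw [Equiv.swap_apply_self, Equiv.swap_apply_left] at this
    exact this.symm
  obtain ⟨σ, hσc, hσd⟩ : ∃ σ : Equiv.Perm (Fin n), σ c = a ∧ σ d = b := by
    refine ⟨(Equiv.swap (τ d) b) * τ, ?_, ?_⟩
    · rw [Equiv.Perm.mul_apply, hτc, Equiv.swap_apply_of_ne_of_ne hτd.symm hab]
    · rw [Equiv.Perm.mul_apply, Equiv.swap_apply_left]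
  apply Finset.card_bij' (fun π _ => π * σ) (fun π _ => π * σ⁻¹)
  · intro π hπ
    simp only [mem_filter, mem_univ, true_and] at hπ ⊢
    rw [Equiv.Perm.mul_apply, Equiv.Perm.mul_apply, hσc, hσd]
    exact hπ
  · intro π hπ
    simp only [mem_filter, mem_univ, true_and] at hπ ⊢
    rw [Equiv.Perm.mul_apply, Equiv.Perm.mul_apply]
    rw [show (σ⁻¹ : Equiv.Perm (Fin n)) a = c by rw [← hσc]; simp,
        show (σ⁻¹ : Equiv.Perm (Fin n)) b = d by rw [← hσd]; simp]
    exact hπ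
  · intro π _; group
  · intro π _; group

private lemma filter_card_eq (S : Finset (Fin n)) (π : Equiv.Perm (Fin n)) :
    (univ.filter (fun x => π x ∈ S)).card = S.card := by
  have : (univ.filter (fun x => π x ∈ S)) = S.image π.symm := by
    ext x
    simp [Equiv.eq_symm_apply]
    constructor
    · intro h; exact ⟨π x, h, by simp⟩
    · rintro ⟨y, hy, rfl⟩; simpa using hy
  rw [this, Finset.card_image_of_injective _ π.symm.injective]

private lemma cnt_mul (S : Finset (Fin n)) {a b : Fin n} (hab : a ≠ b) :
    (univ.filter (fun π : Equiv.Perm (Fin n) => π a ∈ S ∧ π b ∈ S)).card * (n * n - n)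
      = Nat.factorial n * (S.card * S.card - S.card) := by
  have key : ∑ p ∈ (univ : Finset (Fin n)).offDiag,
      (univ.filter (fun π : Equiv.Perm (Fin n) => π p.1 ∈ S ∧ π p.2 ∈ S)).card
      = Nat.factorial n * (S.card * S.card - S.card) := by
    have : ∀ p ∈ (univ : Finset (Fin n)).offDiag,
        (univ.filter (fun π : Equiv.Perm (Fin n) => π p.1 ∈ S ∧ π p.2 ∈ S)).card
        = ∑ π : Equiv.Perm (Fin n), (if π p.1 ∈ S ∧ π p.2 ∈ S then 1 else 0) := by
      intro p _; rw [Finset.card_filter]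
    rw [Finset.sum_congr rfl this, Finset.sum_comm]
    have inner : ∀ π : Equiv.Perm (Fin n),
        (∑ p ∈ (univ : Finset (Fin n)).offDiag, (if π p.1 ∈ S ∧ π p.2 ∈ S then 1 else 0))
        = S.card * S.card - S.card := by
      intro π
      rw [← Finset.card_filter]
      have : ((univ : Finset (Fin n)).offDiag.filter (fun p => π p.1 ∈ S ∧ π p.2 ∈ S))
          = (univ.filter (fun x => π x ∈ S)).offDiag := by
        ext ⟨x, y⟩
        simp [Finset.mem_offDiag]
        tauto
      rw [this, Finset.offDiag_card, filter_card_eq]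
    rw [Finset.sum_congr rfl (fun π _ => inner π), Finset.sum_const, Finset.card_univ,
      Fintype.card_perm, Fintype.card_fin, smul_eq_mul]
  have const : ∀ p ∈ (univ : Finset (Fin n)).offDiag,
      (univ.filter (fun π : Equiv.Perm (Fin n) => π p.1 ∈ S ∧ π p.2 ∈ S)).card
      = (univ.filter (fun π : Equiv.Perm (Fin n) => π a ∈ S ∧ π b ∈ S)).card := by
    intro p hp
    rw [Finset.mem_offDiag] at hp
    exact cnt_symm S hp.2.2 hab
  rw [Finset.sum_congr rfl const, Finset.sum_const, Finset.offDiag_card, Finset.card_univ,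
    Fintype.card_fin, smul_eq_mul, mul_comm] at key
  exact key

private lemma edge_cnt (S : Finset (Fin n)) (e : Sym2 (Fin n)) (he : ¬ e.IsDiag) :
    (univ.filter (fun π : Equiv.Perm (Fin n) => ∀ v ∈ e, π v ∈ S)).card * (n * n - n)
      = Nat.factorial n * (S.card * S.card - S.card) := by
  induction e with
  | _ a b =>
    have hab : a ≠ b := by simpa using he
    have : (univ.filter (fun π : Equiv.Perm (Fin n) => ∀ v ∈ (s(a,b) : Sym2 (Fin n)), π v ∈ S))
        = univ.filter (fun π : Equiv.Perm (Fin n) => π a ∈ S ∧ π b ∈ S) := by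
      apply Finset.filter_congr
      intro π _
      simp [Sym2.mem_iff]
    rw [this, cnt_mul S hab]

private lemma sum_count (G : SimpleGraph (Fin n)) (S : Finset (Fin n))
    (P : ℕ → Prop) [DecidablePred P] (hP : ∀ x : Fin n, P (x.val + 1) ↔ x ∈ S) :
    (∑ π : Equiv.Perm (Fin n),
        (G.edgeFinset.filter (fun e => ∀ v ∈ e, P (lab π v))).card) * (n * n - n)
      = G.edgeFinset.card * (Nat.factorial n * (S.card * S.card - S.card)) := by
  have step : ∀ π : Equiv.Perm (Fin n),
      (G.edgeFinset.filter (fun e => ∀ v ∈ e, P (lab π v))).card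
      = ∑ e ∈ G.edgeFinset, (if ∀ v ∈ e, π v ∈ S then 1 else 0) := by
    intro π
    rw [Finset.card_filter]
    refine Finset.sum_congr rfl (fun e _ => ?_)
    congr 1
    simp only [eq_iff_iff]
    constructor
    · intro h v hv; exact (hP (π v)).mp (h v hv)
    · intro h v hv; exact (hP (π v)).mpr (h v hv)
  calc (∑ π : Equiv.Perm (Fin n),
        (G.edgeFinset.filter (fun e => ∀ v ∈ e, P (lab π v))).card) * (n * n - n)
      = (∑ e ∈ G.edgeFinset,
          (univ.filter (fun π : Equiv.Perm (Fin n) => ∀ v ∈ e, π v ∈ S)).card) * (n * n - n) := by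
        rw [Finset.sum_congr rfl (fun π _ => step π), Finset.sum_comm]
        congr 1
        exact Finset.sum_congr rfl (fun e _ => (Finset.card_filter _ _).symm)
    _ = ∑ e ∈ G.edgeFinset, ((univ.filter (fun π : Equiv.Perm (Fin n) => ∀ v ∈ e, π v ∈ S)).card * (n * n - n)) := by
        rw [Finset.sum_mul]
    _ = ∑ e ∈ G.edgeFinset, (Nat.factorial n * (S.card * S.card - S.card)) := by
        refine Finset.sum_congr rfl (fun e he => ?_)
        exact edge_cnt S e (SimpleGraph.not_isDiag_of_mem_edgeFinset he)
    _ = G.edgeFinset.card * (Nat.factorial n * (S.card * S.card - S.card)) := by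
        rw [Finset.sum_const, smul_eq_mul]


theorem expectation_Rw (n t : ℕ) (hn : 3 ≤ n) (ht1 : 1 ≤ t) (ht2 : t < n)
    (G : SimpleGraph (Fin n)) :
    Ex (fun π => Rw G t π) =
      (G.edgeFinset.card : ℝ) * (((t : ℝ) - 1) * ((n : ℝ) - (t : ℝ) - 1)) /
        (((n : ℝ) - 1) * ((n : ℝ) - 2)) := by
  set S1 : Finset (Fin n) := univ.filter (fun x => x.val < t) with hS1
  set S2 : Finset (Fin n) := univ.filter (fun x => t ≤ x.val) with hS2
  have hS1card : S1.card = t := by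
    rw [hS1]
    have : (univ.filter (fun x : Fin n => x.val < t)) = Finset.map (Fin.castLEEmb ht2.le) univ := by
      ext x
      simp only [mem_filter, mem_univ, true_and, Finset.mem_map]
      constructor
      · intro h
        exact ⟨⟨x.val, h⟩, by ext; simp⟩
      · rintro ⟨y, rfl⟩
        simpa using y.isLt
    rw [this, Finset.card_map, Finset.card_univ, Fintype.card_fin]
  have hS2card : S2.card = n - t := by
    have h := Finset.card_filter_add_card_filter_not
      (s := (univ : Finset (Fin n))) (p := fun x : Fin n => x.val < t)
    have h2 : (univ.filter (fun x : Fin n => ¬ x.val < t)) = S2 := by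
      rw [hS2]; ext x; simp [Nat.not_lt]
    rw [h2, Finset.card_univ, Fintype.card_fin, hS1card] at h
    omega
  have hsum1 := sum_count G S1 (fun m => m ≤ t) (by intro x; simp [hS1])
  have hsum2 := sum_count G S2 (fun m => t < m) (by intro x; simp [hS2])
  rw [hS1card] at hsum1
  rw [hS2card] at hsum2
  have hF : ((Nat.factorial n : ℕ) : ℝ) ≠ 0 := by
    exact_mod_cast Nat.factorial_ne_zero n
  have hn3 : (3:ℝ) ≤ (n:ℝ) := by exact_mod_cast hn
  have hn2 : (n:ℝ) - 2 ≠ 0 := by nlinarith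
  have hn1 : (n:ℝ) - 1 ≠ 0 := by nlinarith
  have hn0 : (n:ℝ) ≠ 0 := by nlinarith
  have hnn : (n:ℝ) * n - n ≠ 0 := by nlinarith
  have h1 : n ≤ n * n := Nat.le_mul_of_pos_left n (by omega)
  have h2 : t ≤ t * t := Nat.le_mul_of_pos_left t (by omega)
  have h3 : n - t ≤ (n - t) * (n - t) := Nat.le_mul_of_pos_left (n - t) (by omega)
  have ht : t ≤ n := ht2.le
  rify [h1, h2, ht] at hsum1
  rify [h1, h3, ht] at hsum2
  have hA : (∑ π : Equiv.Perm (Fin n), (R1 G t π : ℝ))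
      = (G.edgeFinset.card : ℝ) * ((Nat.factorial n : ℝ) * ((t:ℝ) * t - t)) / ((n:ℝ) * n - n) := by
    rw [eq_div_iff hnn]
    exact_mod_cast hsum1
  have hB : (∑ π : Equiv.Perm (Fin n), (R2 G t π : ℝ))
      = (G.edgeFinset.card : ℝ) * ((Nat.factorial n : ℝ) *
          (((n:ℝ) - t) * ((n:ℝ) - t) - ((n:ℝ) - t))) / ((n:ℝ) * n - n) := by
    rw [eq_div_iff hnn]
    exact_mod_cast hsum2
  have hEx : Ex (fun π => Rw G t π)
      = ((1 - ((t : ℝ) - 1) / ((n : ℝ) - 2)) * (∑ π : Equiv.Perm (Fin n), (R1 G t π : ℝ))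
        + (((t : ℝ) - 1) / ((n : ℝ) - 2)) * (∑ π : Equiv.Perm (Fin n), (R2 G t π : ℝ)))
        / (Nat.factorial n) := by
    rw [Ex]
    congr 1
    simp only [Rw]
    rw [Finset.sum_add_distrib, ← Finset.mul_sum, ← Finset.mul_sum]
  rw [hEx, hA, hB]
  field_simp
  ring
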